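/- For invertible self-adjoint bounded operators S and T on a complex Hilbert space and any bounded operator X, ‖S X T⁻¹ + S⁻¹ X T‖ ≥ 2‖X‖. -/

import Mathlib

open ContinuousLinearMap

variable {H : Type*} [NormedAddCommGroup H] [InnerProductSpace ℂ H] [CompleteSpace H]

open NormedSpace

local notation "⟪" x ", " y "⟫" => @inner ℂ _ _ x y

noncomputable def eexp (A : H →L[ℂ] H) (t : ℝ) : H →L[ℂ] H := NormedSpace.exp ((-t) • A)

lemma eexp_hasDerivAt (A : H →L[ℂ] H) (t : ℝ) :
    HasDerivAt (eexp A) (-(A * eexp A t)) t := by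
  have h1 : HasDerivAt (fun s : ℝ => NormedSpace.exp (s • A))
      (A * NormedSpace.exp ((-t) • A)) (-t) := hasDerivAt_exp_smul_const' A (-t)
  have h2 : HasDerivAt (fun t : ℝ => -t) (-1) t := (hasDerivAt_id t).neg
  have h3 := h1.scomp t h2
  unfold eexp
  simpa [Function.comp_def] using h3

lemma eexp_zero (A : H →L[ℂ] H) : eexp A 0 = 1 := by simp [eexp]

lemma eexp_apply_hasDerivAt (A : H →L[ℂ] H) (w : H) (t : ℝ) :
    HasDerivAt (fun t => eexp A t w) (-(A (eexp A t w))) t := by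
  have h := ((ContinuousLinearMap.apply ℂ H w).restrictScalars ℝ).hasFDerivAt.comp_hasDerivAt t
    (eexp_hasDerivAt A t)
  simpa [Function.comp_def] using h

lemma eexp_apply_continuous (A : H →L[ℂ] H) (w : H) :
    Continuous (fun t => eexp A t w) :=
  continuous_iff_continuousAt.2 fun t => (eexp_apply_hasDerivAt A w t).continuousAt

lemma eexp_comm (S A : H →L[ℂ] H) (h : Commute S A) (t : ℝ) (w : H) :
    S (eexp A t w) = eexp A t (S w) := by
  have h2 : Commute S (eexp A t) := ((h.smul_right (-t)).exp_right)
  calc S (eexp A t w) = (S * eexp A t) w := rfl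
    _ = (eexp A t * S) w := by rw [h2]
    _ = _ := rfl

lemma sa_inner {A : H →L[ℂ] H} (hA : IsSelfAdjoint A) (x y : H) :
    ⟪A x, y⟫ = ⟪x, A y⟫ := by
  conv_lhs => rw [← (ContinuousLinearMap.isSelfAdjoint_iff'.1 hA)]
  exact ContinuousLinearMap.adjoint_inner_left A y x

lemma sq_selfAdjoint {S : H →L[ℂ] H} (hS : IsSelfAdjoint S) : IsSelfAdjoint (S * S) := by
  rw [IsSelfAdjoint, star_mul, hS.star_eq]

lemma normsq_hasDerivAt (S : H →L[ℂ] H) (hS : IsSelfAdjoint S) (w : H) (t : ℝ) :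
    HasDerivAt (fun t => ‖eexp (S * S) t w‖ ^ 2)
      (-(2 * ‖S (eexp (S * S) t w)‖ ^ 2)) t := by
  have ha := eexp_apply_hasDerivAt (S * S) w t
  have hinner := ha.inner ℂ ha
  have hre := Complex.reCLM.hasFDerivAt.comp_hasDerivAt t hinner
  have hval : Complex.reCLM (⟪eexp (S*S) t w, -((S*S) (eexp (S*S) t w))⟫
      + ⟪-((S*S) (eexp (S*S) t w)), eexp (S*S) t w⟫)
      = -(2 * ‖S (eexp (S * S) t w)‖ ^ 2) := by
    set x := eexp (S*S) t w
    have h1 : ⟪(S*S) x, x⟫ = ⟪S x, S x⟫ := by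
      rw [ContinuousLinearMap.mul_apply, sa_inner hS]
    have h2 : ⟪x, (S*S) x⟫ = ⟪S x, S x⟫ := by
      rw [ContinuousLinearMap.mul_apply, ← sa_inner hS]
    rw [inner_neg_left, inner_neg_right, h1, h2]
    have : ⟪S x, S x⟫ = (‖S x‖ : ℂ) ^ 2 := inner_self_eq_norm_sq_to_K (S x)
    rw [this]
    simp [← Complex.ofReal_pow]
    ring
  have heq : (fun t => ‖eexp (S * S) t w‖ ^ 2)
      = fun t => Complex.reCLM ⟪eexp (S*S) t w, eexp (S*S) t w⟫ := by
    funext s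
    rw [inner_self_eq_norm_sq_to_K]
    simp [← Complex.ofReal_pow]
  rw [heq, ← hval]
  simpa [Function.comp_def] using hre

lemma normsq_continuous (S : H →L[ℂ] H) (hS : IsSelfAdjoint S) (w : H) :
    Continuous (fun t => ‖eexp (S * S) t w‖ ^ 2) :=
  ((eexp_apply_continuous (S*S) w).norm.pow 2)

lemma half_integral (S : H →L[ℂ] H) (hS : IsSelfAdjoint S) (u : H) (T : ℝ) (hT : 0 ≤ T) :
    ∫ t in (0:ℝ)..T, ‖eexp (S * S) t (S u)‖ ^ 2 ≤ ‖u‖ ^ 2 / 2 := by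
  have hcomm : Commute S (S * S) := (Commute.refl S).mul_right (Commute.refl S)
  have hfun : ∀ t, ‖S (eexp (S*S) t u)‖ ^ 2 = ‖eexp (S*S) t (S u)‖ ^ 2 := by
    intro t; rw [eexp_comm S (S*S) hcomm]
  have hftc : (∫ t in (0:ℝ)..T, -(2 * ‖S (eexp (S*S) t u)‖ ^ 2))
      = ‖eexp (S*S) T u‖ ^ 2 - ‖eexp (S*S) 0 u‖ ^ 2 := by
    apply intervalIntegral.integral_eq_sub_of_hasDerivAt
    · intro t _
      exact normsq_hasDerivAt S hS u t
    · apply Continuous.intervalIntegrable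
      exact ((continuous_const.mul ((S.continuous.comp (eexp_apply_continuous (S*S) u)).norm.pow 2))).neg
  have h0 : ‖eexp (S*S) 0 u‖ ^ 2 = ‖u‖ ^ 2 := by rw [eexp_zero]; simp
  have hTnn : (0:ℝ) ≤ ‖eexp (S*S) T u‖ ^ 2 := sq_nonneg _
  have hint : (∫ t in (0:ℝ)..T, ‖eexp (S*S) t (S u)‖ ^ 2)
      = (‖u‖ ^ 2 - ‖eexp (S*S) T u‖ ^ 2) / 2 := by
    have e1 : (∫ t in (0:ℝ)..T, -(2 * ‖S (eexp (S*S) t u)‖ ^ 2))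
        = -(2 * ∫ t in (0:ℝ)..T, ‖eexp (S*S) t (S u)‖ ^ 2) := by
      rw [intervalIntegral.integral_neg, intervalIntegral.integral_const_mul]
      congr 1
      congr 1
      apply intervalIntegral.integral_congr
      intro t _
      exact hfun t
    rw [e1] at hftc
    rw [h0] at hftc
    linarith
  rw [hint]
  linarith

lemma decay_bound (S : H →L[ℂ] H) (hS : IsSelfAdjoint S) (c : ℝ) (hc : 0 < c)
    (hb : ∀ w, c * ‖w‖ ≤ ‖S w‖) (w : H) (T : ℝ) (hT : 0 ≤ T) :
    ‖eexp (S * S) T w‖ ^ 2 ≤ Real.exp (-(2 * c ^ 2 * T)) * ‖w‖ ^ 2 := by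
  set χ : ℝ → ℝ := fun t => ‖eexp (S * S) t w‖ ^ 2 with hχ
  set ρ : ℝ → ℝ := fun t => Real.exp (2 * c ^ 2 * t) * χ t with hρ
  have hρd : ∀ t, HasDerivAt ρ
      (Real.exp (2 * c ^ 2 * t) * (2 * c ^ 2) * χ t
       + Real.exp (2 * c ^ 2 * t) * (-(2 * ‖S (eexp (S*S) t w)‖ ^ 2))) t := by
    intro t
    have h1 : HasDerivAt (fun t => Real.exp (2 * c ^ 2 * t))
        (Real.exp (2 * c ^ 2 * t) * (2 * c ^ 2)) t := by
      have := Real.hasDerivAt_exp (2 * c ^ 2 * t)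
      have h2 : HasDerivAt (fun t : ℝ => 2 * c ^ 2 * t) (2 * c ^ 2) t := by
        simpa using (hasDerivAt_id t).const_mul (2 * c ^ 2)
      simpa [Function.comp_def] using this.comp t h2
    exact h1.mul (normsq_hasDerivAt S hS w t)
  have hρ' : ∀ t, deriv ρ t ≤ 0 := by
    intro t
    rw [(hρd t).deriv]
    have hb2 : c ^ 2 * χ t ≤ ‖S (eexp (S*S) t w)‖ ^ 2 := by
      have := hb (eexp (S*S) t w)
      have h3 : (c * ‖eexp (S*S) t w‖) ^ 2 ≤ ‖S (eexp (S*S) t w)‖ ^ 2 := by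
        apply pow_le_pow_left₀ (by positivity) this
      calc c ^ 2 * χ t = (c * ‖eexp (S*S) t w‖) ^ 2 := by rw [hχ]; ring
        _ ≤ _ := h3
    have he : (0:ℝ) < Real.exp (2 * c ^ 2 * t) := Real.exp_pos _
    nlinarith
  have hmono : Antitone ρ :=
    antitone_of_deriv_nonpos (fun t => (hρd t).differentiableAt) hρ'
  have h1 : ρ T ≤ ρ 0 := hmono hT
  have h2 : ρ 0 = ‖w‖ ^ 2 := by simp [hρ, hχ, eexp_zero]
  rw [h2] at h1
  have h3 : χ T ≤ Real.exp (-(2 * c ^ 2 * T)) * ‖w‖ ^ 2 := by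
    rw [Real.exp_neg]
    have h1' : Real.exp (2 * c ^ 2 * T) * χ T ≤ ‖w‖ ^ 2 := h1
    have he : (0:ℝ) < Real.exp (2 * c ^ 2 * T) := Real.exp_pos _
    rw [inv_mul_eq_div, le_div_iff₀ he]
    nlinarith
  exact h3

lemma cs_integral {f g : ℝ → ℝ} {T : ℝ} (hT : 0 ≤ T) (hf : Continuous f) (hg : Continuous g)
    (hf0 : ∀ t, 0 ≤ f t) (hg0 : ∀ t, 0 ≤ g t) :
    ∫ t in (0:ℝ)..T, f t * g t ≤
      Real.sqrt (∫ t in (0:ℝ)..T, f t ^ 2) * Real.sqrt (∫ t in (0:ℝ)..T, g t ^ 2) := by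
  set A := ∫ t in (0:ℝ)..T, f t ^ 2 with hA
  set B := ∫ t in (0:ℝ)..T, g t ^ 2 with hB
  set C := ∫ t in (0:ℝ)..T, f t * g t with hC
  have hA0 : 0 ≤ A := intervalIntegral.integral_nonneg hT (fun t _ => sq_nonneg _)
  have hB0 : 0 ≤ B := intervalIntegral.integral_nonneg hT (fun t _ => sq_nonneg _)
  have hC0 : 0 ≤ C := intervalIntegral.integral_nonneg hT
    (fun t _ => mul_nonneg (hf0 t) (hg0 t))
  have key : ∀ l : ℝ, 0 ≤ B * (l * l) + (-(2 * C)) * l + A := by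
    intro l
    have h1 : (0:ℝ) ≤ ∫ t in (0:ℝ)..T, (f t - l * g t) ^ 2 :=
      intervalIntegral.integral_nonneg hT (fun t _ => sq_nonneg _)
    have h2 : (∫ t in (0:ℝ)..T, (f t - l * g t) ^ 2)
        = A - (2 * l) * C + (l * l) * B := by
      have hexp : ∀ t, (f t - l * g t) ^ 2
          = f t ^ 2 - (2 * l) * (f t * g t) + (l * l) * g t ^ 2 := fun t => by ring
      rw [intervalIntegral.integral_congr (g := fun t =>
          f t ^ 2 - (2 * l) * (f t * g t) + (l * l) * g t ^ 2) (fun t _ => hexp t)]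
      rw [intervalIntegral.integral_add, intervalIntegral.integral_sub,
        intervalIntegral.integral_const_mul, intervalIntegral.integral_const_mul]
      · exact (hf.pow 2).intervalIntegrable 0 T
      · exact (continuous_const.mul (hf.mul hg)).intervalIntegrable 0 T
      · exact ((hf.pow 2).sub (continuous_const.mul (hf.mul hg))).intervalIntegrable 0 T
      · exact (continuous_const.mul (hg.pow 2)).intervalIntegrable 0 T
    nlinarith [h1, h2]
  have hd := discrim_le_zero key
  rw [discrim] at hd
  have hC2 : C ^ 2 ≤ A * B := by nlinarith
  calc C = Real.sqrt (C ^ 2) := (Real.sqrt_sq hC0).symm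
    _ ≤ Real.sqrt (A * B) := Real.sqrt_le_sqrt hC2
    _ = Real.sqrt A * Real.sqrt B := Real.sqrt_mul hA0 B

lemma key_ineq (S T Z : H →L[ℂ] H) (hS : IsSelfAdjoint S) (hT : IsSelfAdjoint T)
    (cS cT : ℝ) (hcS : 0 < cS) (hcT : 0 < cT)
    (hbS : ∀ w, cS * ‖w‖ ≤ ‖S w‖) (hbT : ∀ w, cT * ‖w‖ ≤ ‖T w‖) :
    2 * ‖S * Z * T‖ ≤ ‖S * S * Z + Z * (T * T)‖ := by
  set M := S * S * Z + Z * (T * T) with hM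
  have core : ∀ u v : H, ‖⟪u, (S * Z * T) v⟫‖ ≤ ‖M‖ / 2 * (‖u‖ * ‖v‖) := by
    intro u v
    set a : ℝ → H := fun t => eexp (S * S) t (S u) with ha
    set b : ℝ → H := fun t => eexp (T * T) t (T v) with hb
    set ψ : ℝ → ℂ := fun t => ⟪a t, Z (b t)⟫ with hψ
    have hacont : Continuous a := eexp_apply_continuous _ _
    have hbcont : Continuous b := eexp_apply_continuous _ _
    have hψd : ∀ t, HasDerivAt ψ (-⟪a t, M (b t)⟫) t := by
      intro t
      have ha' := eexp_apply_hasDerivAt (S * S) (S u) t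
      have hb' := eexp_apply_hasDerivAt (T * T) (T v) t
      have hZb : HasDerivAt (fun t => Z (b t)) (Z (-((T * T) (b t)))) t := by
        have := (Z.restrictScalars ℝ).hasFDerivAt.comp_hasDerivAt t hb'
        simpa [Function.comp_def] using this
      have hinner := HasDerivAt.inner ℂ ha' hZb
      refine HasDerivAt.congr_deriv hinner ?_
      symm
      have e1 : ⟪a t, Z (-((T * T) (b t)))⟫ = -⟪a t, Z ((T * T) (b t))⟫ := by
        rw [map_neg, inner_neg_right]
      have e2 : ⟪-((S * S) (a t)), Z (b t)⟫ = -⟪a t, (S * S) (Z (b t))⟫ := by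
        rw [inner_neg_left, sa_inner (sq_selfAdjoint hS)]
      rw [e1, e2, hM]
      simp only [ContinuousLinearMap.add_apply, ContinuousLinearMap.mul_apply, inner_add_right]
      ring
    have hbound : ∀ t, ‖-⟪a t, M (b t)⟫‖ ≤ ‖M‖ * (‖a t‖ * ‖b t‖) := by
      intro t
      rw [norm_neg]
      calc ‖⟪a t, M (b t)⟫‖ ≤ ‖a t‖ * ‖M (b t)‖ := norm_inner_le_norm _ _
        _ ≤ ‖a t‖ * (‖M‖ * ‖b t‖) :=
            mul_le_mul_of_nonneg_left (M.le_opNorm _) (norm_nonneg _)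
        _ = ‖M‖ * (‖a t‖ * ‖b t‖) := by ring
    have hcontψ' : Continuous fun t => -⟪a t, M (b t)⟫ :=
      (hacont.inner (M.continuous.comp hbcont)).neg
    have main : ∀ Tt : ℝ, 0 ≤ Tt → ‖ψ 0‖ ≤ ‖M‖ / 2 * (‖u‖ * ‖v‖) + ‖ψ Tt‖ := by
      intro Tt hTt
      have hftc : (∫ t in (0:ℝ)..Tt, -⟪a t, M (b t)⟫) = ψ Tt - ψ 0 :=
        intervalIntegral.integral_eq_sub_of_hasDerivAt (fun t _ => hψd t)
          (hcontψ'.intervalIntegrable 0 Tt)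
      have h1 : ‖ψ 0‖ ≤ ‖ψ Tt‖ + ‖∫ t in (0:ℝ)..Tt, -⟪a t, M (b t)⟫‖ := by
        rw [hftc]
        calc ‖ψ 0‖ = ‖ψ Tt - (ψ Tt - ψ 0)‖ := by ring_nf
          _ ≤ ‖ψ Tt‖ + ‖ψ Tt - ψ 0‖ := norm_sub_le _ _
      have h2 : ‖∫ t in (0:ℝ)..Tt, -⟪a t, M (b t)⟫‖
          ≤ ∫ t in (0:ℝ)..Tt, ‖M‖ * (‖a t‖ * ‖b t‖) := by
        calc ‖∫ t in (0:ℝ)..Tt, -⟪a t, M (b t)⟫‖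
            ≤ ∫ t in (0:ℝ)..Tt, ‖-⟪a t, M (b t)⟫‖ :=
              intervalIntegral.norm_integral_le_integral_norm hTt
          _ ≤ ∫ t in (0:ℝ)..Tt, ‖M‖ * (‖a t‖ * ‖b t‖) := by
              apply intervalIntegral.integral_mono_on hTt
                (hcontψ'.norm.intervalIntegrable 0 Tt)
                ((continuous_const.mul (hacont.norm.mul hbcont.norm)).intervalIntegrable 0 Tt)
              intro t _
              exact hbound t
      have h3 : (∫ t in (0:ℝ)..Tt, ‖M‖ * (‖a t‖ * ‖b t‖))
          ≤ ‖M‖ / 2 * (‖u‖ * ‖v‖) := by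
        rw [intervalIntegral.integral_const_mul]
        have hcs := cs_integral hTt hacont.norm hbcont.norm
          (fun t => norm_nonneg _) (fun t => norm_nonneg _)
        have hA : (∫ t in (0:ℝ)..Tt, ‖a t‖ ^ 2) ≤ ‖u‖ ^ 2 / 2 :=
          half_integral S hS u Tt hTt
        have hB : (∫ t in (0:ℝ)..Tt, ‖b t‖ ^ 2) ≤ ‖v‖ ^ 2 / 2 :=
          half_integral T hT v Tt hTt
        have hA0 : (0:ℝ) ≤ ∫ t in (0:ℝ)..Tt, ‖a t‖ ^ 2 :=
          intervalIntegral.integral_nonneg hTt (fun t _ => sq_nonneg _)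
        have hB0 : (0:ℝ) ≤ ∫ t in (0:ℝ)..Tt, ‖b t‖ ^ 2 :=
          intervalIntegral.integral_nonneg hTt (fun t _ => sq_nonneg _)
        have hsq : Real.sqrt (∫ t in (0:ℝ)..Tt, ‖a t‖ ^ 2)
            * Real.sqrt (∫ t in (0:ℝ)..Tt, ‖b t‖ ^ 2) ≤ ‖u‖ * ‖v‖ / 2 := by
          calc Real.sqrt (∫ t in (0:ℝ)..Tt, ‖a t‖ ^ 2)
              * Real.sqrt (∫ t in (0:ℝ)..Tt, ‖b t‖ ^ 2)
              ≤ Real.sqrt (‖u‖ ^ 2 / 2) * Real.sqrt (‖v‖ ^ 2 / 2) :=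
                mul_le_mul (Real.sqrt_le_sqrt hA) (Real.sqrt_le_sqrt hB)
                  (Real.sqrt_nonneg _) (Real.sqrt_nonneg _)
            _ = Real.sqrt ((‖u‖ ^ 2 / 2) * (‖v‖ ^ 2 / 2)) :=
                (Real.sqrt_mul (by positivity) _).symm
            _ = Real.sqrt ((‖u‖ * ‖v‖ / 2) ^ 2) := by ring_nf
            _ = ‖u‖ * ‖v‖ / 2 := Real.sqrt_sq (by positivity)
        calc ‖M‖ * ∫ t in (0:ℝ)..Tt, ‖a t‖ * ‖b t‖
            ≤ ‖M‖ * (Real.sqrt (∫ t in (0:ℝ)..Tt, ‖a t‖ ^ 2)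
              * Real.sqrt (∫ t in (0:ℝ)..Tt, ‖b t‖ ^ 2)) :=
              mul_le_mul_of_nonneg_left hcs (norm_nonneg _)
          _ ≤ ‖M‖ * (‖u‖ * ‖v‖ / 2) := mul_le_mul_of_nonneg_left hsq (norm_nonneg _)
          _ = ‖M‖ / 2 * (‖u‖ * ‖v‖) := by ring
      linarith
    -- tail bound
    have htail : ∀ Tt : ℝ, 0 ≤ Tt →
        ‖ψ Tt‖ ≤ ‖Z‖ * ‖S u‖ * ‖T v‖ * Real.exp (-((cS ^ 2 + cT ^ 2) * Tt)) := by
      intro Tt hTt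
      have hda : ‖a Tt‖ ≤ Real.exp (-(cS ^ 2 * Tt)) * ‖S u‖ := by
        have hd := decay_bound S hS cS hcS hbS (S u) Tt hTt
        have he : Real.exp (-(2 * cS ^ 2 * Tt))
            = (Real.exp (-(cS ^ 2 * Tt))) ^ 2 := by
          rw [← Real.exp_nat_mul]
          congr 1
          push_cast
          ring
        have : ‖a Tt‖ ^ 2 ≤ (Real.exp (-(cS ^ 2 * Tt)) * ‖S u‖) ^ 2 := by
          rw [mul_pow, ← he]
          exact hd
        calc ‖a Tt‖ = Real.sqrt (‖a Tt‖ ^ 2) := (Real.sqrt_sq (norm_nonneg _)).symm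
          _ ≤ Real.sqrt ((Real.exp (-(cS ^ 2 * Tt)) * ‖S u‖) ^ 2) := Real.sqrt_le_sqrt this
          _ = Real.exp (-(cS ^ 2 * Tt)) * ‖S u‖ := Real.sqrt_sq (by positivity)
      have hdb : ‖b Tt‖ ≤ Real.exp (-(cT ^ 2 * Tt)) * ‖T v‖ := by
        have hd := decay_bound T hT cT hcT hbT (T v) Tt hTt
        have he : Real.exp (-(2 * cT ^ 2 * Tt))
            = (Real.exp (-(cT ^ 2 * Tt))) ^ 2 := by
          rw [← Real.exp_nat_mul]
          congr 1
          push_cast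
          ring
        have : ‖b Tt‖ ^ 2 ≤ (Real.exp (-(cT ^ 2 * Tt)) * ‖T v‖) ^ 2 := by
          rw [mul_pow, ← he]
          exact hd
        calc ‖b Tt‖ = Real.sqrt (‖b Tt‖ ^ 2) := (Real.sqrt_sq (norm_nonneg _)).symm
          _ ≤ Real.sqrt ((Real.exp (-(cT ^ 2 * Tt)) * ‖T v‖) ^ 2) := Real.sqrt_le_sqrt this
          _ = Real.exp (-(cT ^ 2 * Tt)) * ‖T v‖ := Real.sqrt_sq (by positivity)
      have h1 : ‖ψ Tt‖ ≤ ‖a Tt‖ * (‖Z‖ * ‖b Tt‖) := by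
        calc ‖ψ Tt‖ ≤ ‖a Tt‖ * ‖Z (b Tt)‖ := norm_inner_le_norm _ _
          _ ≤ ‖a Tt‖ * (‖Z‖ * ‖b Tt‖) :=
              mul_le_mul_of_nonneg_left (Z.le_opNorm _) (norm_nonneg _)
      calc ‖ψ Tt‖ ≤ ‖a Tt‖ * (‖Z‖ * ‖b Tt‖) := h1
        _ ≤ (Real.exp (-(cS ^ 2 * Tt)) * ‖S u‖)
            * (‖Z‖ * (Real.exp (-(cT ^ 2 * Tt)) * ‖T v‖)) := by
            apply mul_le_mul hda (mul_le_mul_of_nonneg_left hdb (norm_nonneg _))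
              (by positivity) (by positivity)
        _ = ‖Z‖ * ‖S u‖ * ‖T v‖ * (Real.exp (-(cS ^ 2 * Tt)) * Real.exp (-(cT ^ 2 * Tt))) := by
            ring
        _ = ‖Z‖ * ‖S u‖ * ‖T v‖ * Real.exp (-((cS ^ 2 + cT ^ 2) * Tt)) := by
            rw [← Real.exp_add]
            congr 1
            ring
    -- pass to the limit
    have hψ0 : ‖ψ 0‖ ≤ ‖M‖ / 2 * (‖u‖ * ‖v‖) := by
      have hδ : (0:ℝ) < cS ^ 2 + cT ^ 2 := by positivity
      have htend : Filter.Tendsto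
          (fun Tt : ℝ => ‖M‖ / 2 * (‖u‖ * ‖v‖)
            + ‖Z‖ * ‖S u‖ * ‖T v‖ * Real.exp (-((cS ^ 2 + cT ^ 2) * Tt)))
          Filter.atTop (nhds (‖M‖ / 2 * (‖u‖ * ‖v‖) + ‖Z‖ * ‖S u‖ * ‖T v‖ * 0)) := by
        apply Filter.Tendsto.const_add
        apply Filter.Tendsto.const_mul
        apply Real.tendsto_exp_atBot.comp
        apply Filter.tendsto_neg_atTop_atBot.comp
        exact Filter.Tendsto.const_mul_atTop hδ Filter.tendsto_id
      have hev : ∀ᶠ Tt in Filter.atTop, ‖ψ 0‖ ≤ ‖M‖ / 2 * (‖u‖ * ‖v‖)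
          + ‖Z‖ * ‖S u‖ * ‖T v‖ * Real.exp (-((cS ^ 2 + cT ^ 2) * Tt)) := by
        filter_upwards [Filter.eventually_ge_atTop (0:ℝ)] with Tt hTt
        calc ‖ψ 0‖ ≤ ‖M‖ / 2 * (‖u‖ * ‖v‖) + ‖ψ Tt‖ := main Tt hTt
          _ ≤ _ := by
              have := htail Tt hTt
              linarith
      have := ge_of_tendsto htend hev
      simpa using this
    have hψ0eq : ψ 0 = ⟪u, (S * Z * T) v⟫ := by
      have ha0 : a 0 = S u := by rw [ha]; simp [eexp_zero]
      have hb0 : b 0 = T v := by rw [hb]; simp [eexp_zero]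
      rw [hψ]
      simp only [ha0, hb0]
      rw [sa_inner hS]
      simp [ContinuousLinearMap.mul_apply]
    rw [hψ0eq] at hψ0
    exact hψ0
  have hMnn : (0:ℝ) ≤ ‖M‖ / 2 := by positivity
  have hop : ‖S * Z * T‖ ≤ ‖M‖ / 2 := by
    apply ContinuousLinearMap.opNorm_le_bound _ hMnn
    intro v
    set w := (S * Z * T) v with hw
    have h1 := core w v
    have h2 : ‖⟪w, (S * Z * T) v⟫‖ = ‖w‖ ^ 2 := by
      rw [← hw, inner_self_eq_norm_sq_to_K]
      simp [← Complex.ofReal_pow]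
    rw [h2] at h1
    rcases eq_or_lt_of_le (norm_nonneg w) with h0 | h0
    · rw [← h0]
      positivity
    · have hmul : ‖w‖ * ‖w‖ ≤ (‖M‖ / 2 * ‖v‖) * ‖w‖ := by nlinarith
      exact le_of_mul_le_mul_right hmul h0
  linarith

theorem stmt2 (S T : (H →L[ℂ] H)ˣ) (hS : IsSelfAdjoint (S : H →L[ℂ] H))
    (hT : IsSelfAdjoint (T : H →L[ℂ] H)) (X : H →L[ℂ] H) :
    2 * ‖X‖ ≤ ‖(S : H →L[ℂ] H) * X * (↑T⁻¹ : H →L[ℂ] H) + (↑S⁻¹ : H →L[ℂ] H) * X * (T : H →L[ℂ] H)‖ := by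
  rcases subsingleton_or_nontrivial H with hsub | hnt
  · have : Subsingleton (H →L[ℂ] H) := ⟨fun f g => ContinuousLinearMap.ext fun x =>
      Subsingleton.elim _ _⟩
    have hX : X = 0 := Subsingleton.elim _ _
    rw [hX]
    simp
  · set Sc : H →L[ℂ] H := (S : H →L[ℂ] H) with hSc
    set Tc : H →L[ℂ] H := (T : H →L[ℂ] H) with hTc
    set Si : H →L[ℂ] H := (↑S⁻¹ : H →L[ℂ] H) with hSi
    set Ti : H →L[ℂ] H := (↑T⁻¹ : H →L[ℂ] H) with hTi
    have hSSi : Sc * Si = 1 := S.mul_inv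
    have hSiS : Si * Sc = 1 := S.inv_mul
    have hTTi : Tc * Ti = 1 := T.mul_inv
    have hTiT : Ti * Tc = 1 := T.inv_mul
    have hSine : Si ≠ 0 := by
      intro h
      have : (1 : H →L[ℂ] H) = 0 := by rw [← hSSi, h, mul_zero]
      exact one_ne_zero this
    have hTine : Ti ≠ 0 := by
      intro h
      have : (1 : H →L[ℂ] H) = 0 := by rw [← hTTi, h, mul_zero]
      exact one_ne_zero this
    have hSipos : 0 < ‖Si‖ := norm_pos_iff.2 hSine
    have hTipos : 0 < ‖Ti‖ := norm_pos_iff.2 hTine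
    have hbS : ∀ w, ‖Si‖⁻¹ * ‖w‖ ≤ ‖Sc w‖ := by
      intro w
      rw [inv_mul_le_iff₀ hSipos]
      calc ‖w‖ = ‖Si (Sc w)‖ := by
            rw [← ContinuousLinearMap.mul_apply, hSiS, ContinuousLinearMap.one_apply]
        _ ≤ ‖Si‖ * ‖Sc w‖ := Si.le_opNorm _
    have hbT : ∀ w, ‖Ti‖⁻¹ * ‖w‖ ≤ ‖Tc w‖ := by
      intro w
      rw [inv_mul_le_iff₀ hTipos]
      calc ‖w‖ = ‖Ti (Tc w)‖ := by
            rw [← ContinuousLinearMap.mul_apply, hTiT, ContinuousLinearMap.one_apply]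
        _ ≤ ‖Ti‖ * ‖Tc w‖ := Ti.le_opNorm _
    have key := key_ineq Sc Tc (Si * X * Ti) hS hT ‖Si‖⁻¹ ‖Ti‖⁻¹
      (by positivity) (by positivity) hbS hbT
    have e1 : Sc * (Si * X * Ti) * Tc = X := by
      calc Sc * (Si * X * Ti) * Tc = (Sc * Si) * X * (Ti * Tc) := by
            simp only [mul_assoc]
        _ = X := by rw [hSSi, hTiT, one_mul, mul_one]
    have e2 : Sc * Sc * (Si * X * Ti) = Sc * X * Ti := by
      calc Sc * Sc * (Si * X * Ti) = Sc * ((Sc * Si) * (X * Ti)) := by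
            simp only [mul_assoc]
        _ = Sc * X * Ti := by rw [hSSi, one_mul, ← mul_assoc]
    have e3 : (Si * X * Ti) * (Tc * Tc) = Si * X * Tc := by
      calc (Si * X * Ti) * (Tc * Tc) = Si * X * ((Ti * Tc) * Tc) := by
            simp only [mul_assoc]
        _ = Si * X * Tc := by rw [hTiT, one_mul]
    rw [e1, e2, e3] at key
    exact key
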